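/- Lower bound for Riesz means of the example function: let f = D_{2^{2n+1}} − D_{2^{2n}} on the dyadic group, q = 2^{2n} + 2^{2s} with 0 ≤ s < n, and l_q = Σ_{k=1}^q 1/k. Then for every x ∈ I_{2s} \ I_{2s+1}, |R_q f(x)| ≥ c · 4^{2s} / (l_q · 2^{2n}) for an absolute constant c > 0, where R_q f = (1/l_q) Σ_{j=1}^q S_j f / j. -/

import Mathlib

open Finset

/-- The dyadic group `G = (ℤ/2)^ℕ`. -/
abbrev G := ℕ → ZMod 2

/-- Walsh–Paley functions: `w n x = ∏ k, ((-1)^(x k))^(n_k)` for the binary expansion of `n`. -/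
noncomputable def walsh (n : ℕ) (x : G) : ℝ :=
  ∏ k ∈ Finset.range (n + 1), if n.testBit k then (-1 : ℝ) ^ (x k).val else 1

/-- Walsh–Dirichlet kernels `D m = ∑_{k<m} w k`. -/
noncomputable def dirichlet (m : ℕ) (x : G) : ℝ :=
  ∑ k ∈ Finset.range m, walsh k x

/-- Walsh–Fejér kernels `K n = (1/n) ∑_{k<n} D k`. -/
noncomputable def fejer (n : ℕ) (x : G) : ℝ :=
  (1 / (n : ℝ)) * ∑ k ∈ Finset.range n, dirichlet k x

/-- The cylinder set `I_N = {t : t_0 = ⋯ = t_{N-1} = 0}`. -/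
def IN (N : ℕ) : Set G := {t | ∀ j < N, t j = 0}

open MeasureTheory

instance : TopologicalSpace (ZMod 2) := ⊥
instance : DiscreteTopology (ZMod 2) := ⟨rfl⟩
instance : MeasurableSpace G := borel G
instance : BorelSpace G := ⟨rfl⟩

/-- The normalized Haar measure on the compact group `G`. -/
noncomputable def haarG : Measure G :=
  Measure.addHaarMeasure ⟨⟨Set.univ, isCompact_univ⟩, by simp⟩

lemma two_pow_xor {a m : ℕ} (h : m < 2 ^ a) : 2 ^ a ^^^ m = 2 ^ a + m := by
  refine Nat.eq_of_testBit_eq fun j => ?_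
  rcases lt_trichotomy j a with hj | rfl | hj
  · rw [Nat.testBit_xor, Nat.testBit_two_pow_of_ne (Nat.ne_of_gt hj),
      Nat.testBit_two_pow_add_gt hj]
    simp
  · rw [Nat.testBit_xor, Nat.testBit_two_pow_self, Nat.testBit_two_pow_add_eq,
      Nat.testBit_eq_false_of_lt h]
    rfl
  · have h1 : 2 ^ a + m < 2 ^ j := by
      calc 2 ^ a + m < 2 ^ a + 2 ^ a := by omega
      _ = 2 ^ (a + 1) := by ring
      _ ≤ 2 ^ j := Nat.pow_le_pow_right (by norm_num) hj
    rw [Nat.testBit_xor, Nat.testBit_two_pow_of_ne (Nat.ne_of_lt hj),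
      Nat.testBit_eq_false_of_lt (lt_of_le_of_lt (Nat.le_add_left m _) h1),
      Nat.testBit_eq_false_of_lt h1]
    rfl

lemma walsh_eq_prod (n N : ℕ) (hN : n < N) (x : G) :
    walsh n x = ∏ k ∈ Finset.range N, if n.testBit k then (-1 : ℝ) ^ (x k).val else 1 := by
  refine Finset.prod_subset (Finset.range_subset_range.mpr hN) fun k _ hk => ?_
  simp only [Finset.mem_range, not_lt] at hk
  rw [Nat.testBit_eq_false_of_lt (lt_of_lt_of_le (Nat.lt_two_pow_self (n := n))
    (Nat.pow_le_pow_right (by norm_num) (by omega)))]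
  simp

lemma neg_one_pow_one_add (v : ZMod 2) : (-1:ℝ)^((1+v).val) = -(-1:ℝ)^(v.val) := by
  fin_cases v
  · show (-1:ℝ)^1 = -(-1)^0; norm_num
  · show (-1:ℝ)^0 = -(-1)^1; norm_num

lemma neg_one_pow_val_sq (v : ZMod 2) : ((-1 : ℝ) ^ v.val) * ((-1 : ℝ) ^ v.val) = 1 := by
  rw [← pow_add, Even.neg_one_pow ⟨v.val, rfl⟩]

lemma walsh_mul (k i : ℕ) (x : G) : walsh k x * walsh i x = walsh (k ^^^ i) x := by
  have h2 : ∀ m : ℕ, m ≤ max k i → m < 2 ^ (max k i + 1) := fun m hm =>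
    lt_of_le_of_lt hm (lt_of_lt_of_le Nat.lt_two_pow_self (Nat.pow_le_pow_right (by norm_num) (by omega)))
  have hx : k ^^^ i < 2 ^ (max k i + 1) :=
    Nat.xor_lt_two_pow (h2 k (le_max_left _ _)) (h2 i (le_max_right _ _))
  rw [walsh_eq_prod k _ (h2 k (le_max_left _ _)), walsh_eq_prod i _ (h2 i (le_max_right _ _)),
    walsh_eq_prod (k ^^^ i) _ hx, ← Finset.prod_mul_distrib]
  refine Finset.prod_congr rfl fun j _ => ?_
  rw [Nat.testBit_xor]
  cases hk : k.testBit j <;> cases hi : i.testBit j <;>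
    simp [neg_one_pow_val_sq]

lemma walsh_zero_eq (x : G) : walsh 0 x = 1 := by
  simp [walsh, Nat.zero_testBit]

lemma walsh_two_pow (a : ℕ) (x : G) : walsh (2 ^ a) x = (-1 : ℝ) ^ (x a).val := by
  rw [walsh]
  rw [Finset.prod_eq_single a]
  · simp [Nat.testBit_two_pow_self]
  · intro b _ hb
    rw [Nat.testBit_two_pow_of_ne (Ne.symm hb)]
    simp
  · intro h
    exact absurd (Finset.mem_range.mpr (Nat.lt_succ_of_le (Nat.le_of_lt (Nat.lt_two_pow_self (n := a))))) h

lemma walsh_low {L m : ℕ} (x : G) (hx : ∀ j < L, x j = 0) (hm : m < 2 ^ L) :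
    walsh m x = 1 := by
  rw [walsh]
  refine Finset.prod_eq_one fun k _ => ?_
  by_cases hk : m.testBit k
  · have hkL : k < L := by
      by_contra hc
      rw [Nat.testBit_eq_false_of_lt (lt_of_lt_of_le hm
        (Nat.pow_le_pow_right (by norm_num) (by omega)))] at hk
      exact Bool.false_ne_true hk
    simp [hk, hx k hkL]
  · simp [hk]

lemma walsh_sq (n : ℕ) (x : G) : walsh n x = 1 ∨ walsh n x = -1 := by
  rw [walsh]
  induction (Finset.range (n+1)) using Finset.induction with
  | empty => left; simp
  | @insert a t h ih =>
    rw [Finset.prod_insert h]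
    have : ∀ v : ZMod 2, ((-1:ℝ)) ^ v.val = 1 ∨ ((-1:ℝ)) ^ v.val = -1 := fun v => by
      rcases Nat.even_or_odd v.val with h | h
      · left; exact Even.neg_one_pow h
      · right; exact Odd.neg_one_pow h
    rcases ih with h1 | h1 <;> rcases this (x a) with h2 | h2 <;>
      by_cases ht : Nat.testBit n a <;> simp [ht, h1, h2]


instance : IsProbabilityMeasure haarG := ⟨Measure.addHaarMeasure_self⟩
instance : haarG.IsAddLeftInvariant := by unfold haarG; infer_instance

lemma cont_test (k : ℕ) : Continuous fun x : G => (-1 : ℝ) ^ (x k).val :=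
  (continuous_of_discreteTopology (f := fun v : ZMod 2 => (-1 : ℝ) ^ v.val)).comp (continuous_apply k)

example (f : G → ℝ) (e : G) : ∫ x, f (e + x) ∂haarG = ∫ x, f x ∂haarG :=
  MeasureTheory.integral_add_left_eq_self (μ := haarG) f e

lemma walsh_continuous (n : ℕ) : Continuous (walsh n) := by
  unfold walsh
  refine continuous_finset_prod _ fun k _ => ?_
  by_cases h : n.testBit k
  · simpa [h] using cont_test k
  · simp only [h, if_false]; exact continuous_const

lemma walsh_integrable (n : ℕ) : Integrable (walsh n) haarG :=
  (walsh_continuous n).integrable_of_hasCompactSupport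
    ((isClosed_tsupport _).isCompact)

lemma integral_walsh (n : ℕ) :
    ∫ x, walsh n x ∂haarG = if n = 0 then 1 else 0 := by
  rcases eq_or_ne n 0 with rfl | hn
  · simp [walsh_zero_eq]
  · simp only [hn, if_false]
    -- pick a set bit
    obtain ⟨b, hb⟩ : ∃ b, n.testBit b := by
      by_contra hc
      push_neg at hc
      exact hn (Nat.zero_of_testBit_eq_false (by simpa using hc))
    set e : G := fun j => if j = b then 1 else 0 with he
    have key : ∀ y : G, walsh n (e + y) = - walsh n y := by
      intro y
      have hbmem : b ∈ Finset.range (n + 1) := by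
        have h1 : 2 ^ b ≤ n := Nat.ge_two_pow_of_testBit hb
        have h2 : b < 2 ^ b := Nat.lt_two_pow_self (n := b)
        exact Finset.mem_range.mpr (by omega)
      rw [walsh, walsh, ← Finset.mul_prod_erase _ _ hbmem, ← Finset.mul_prod_erase _ _ hbmem]
      have hfac : (if n.testBit b then (-1:ℝ) ^ ((e + y) b).val else 1)
          = - (if n.testBit b then (-1:ℝ) ^ (y b).val else 1) := by
        rw [if_pos hb, if_pos hb]
        have : (e + y) b = 1 + y b := by simp [he]
        rw [this]
        exact neg_one_pow_one_add (y b)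
      rw [hfac]
      have hrest : ∀ k ∈ (Finset.range (n+1)).erase b,
          (if n.testBit k then (-1:ℝ) ^ ((e + y) k).val else 1)
            = (if n.testBit k then (-1:ℝ) ^ (y k).val else 1) := by
        intro k hk
        have hkb : k ≠ b := (Finset.mem_erase.mp hk).1
        have : (e + y) k = y k := by simp [he, hkb]
        rw [this]
      rw [Finset.prod_congr rfl hrest]
      ring
    have h1 : ∫ x, walsh n x ∂haarG = ∫ x, walsh n (e + x) ∂haarG :=
      (MeasureTheory.integral_add_left_eq_self (μ := haarG) (walsh n) e).symm
    have h2 : ∫ x, walsh n (e + x) ∂haarG = - ∫ x, walsh n x ∂haarG := by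
      simp_rw [key]
      exact integral_neg _
    have := h1.trans h2
    linarith

lemma integral_walsh_mul (k i : ℕ) :
    ∫ x, walsh k x * walsh i x ∂haarG = if k = i then 1 else 0 := by
  simp_rw [walsh_mul]
  rw [integral_walsh]
  simp [xor_eq_zero_iff]


/-- **Lower bound for Riesz means of the example function.** Let
`f = D_{2^{2n+1}} − D_{2^{2n}}`, `q = 2^{2n} + 2^{2s}` with `0 ≤ s < n`, and
`l_q = ∑_{k=1}^q 1/k`. Then there is an absolute constant `c > 0` such that for every
`x ∈ I_{2s} \ I_{2s+1}`, `|R_q f(x)| ≥ c · 4^{2s} / (l_q · 2^{2n})`, where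
`R_q f = (1/l_q) ∑_{j=1}^q S_j f / j`. -/
theorem riesz_lower_bound_example :
    ∃ c : ℝ, 0 < c ∧ ∀ (n s : ℕ), s < n → ∀ (q : ℕ), q = 2 ^ (2 * n) + 2 ^ (2 * s) →
      ∀ (f : G → ℝ), (∀ y, f y = dirichlet (2 ^ (2 * n + 1)) y - dirichlet (2 ^ (2 * n)) y) →
      ∀ (fhat : ℕ → ℝ), (∀ i, fhat i = ∫ y, f y * walsh i y ∂haarG) →
      ∀ (S : ℕ → G → ℝ), (∀ j y, S j y = ∑ k ∈ Finset.range j, fhat k * walsh k y) →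
      ∀ (lq : ℝ), lq = ∑ k ∈ Finset.Icc 1 q, (1 : ℝ) / k →
      ∀ (x : G), (∀ j < 2 * s, x j = 0) → x (2 * s) = 1 →
      c * 4 ^ (2 * s) / (lq * 2 ^ (2 * n))
        ≤ |(1 / lq) * ∑ j ∈ Finset.Icc 1 q, S j x / (j : ℝ)| := by
  refine ⟨1/4, by norm_num, ?_⟩
  intro n s hsn q hq f hf fhat hfhat S hS lq hlq x hx _hx2
  set A := 2 ^ (2*n) with hA
  set B := 2 ^ (2*s) with hB
  have hBA : B ≤ A := Nat.pow_le_pow_right (by norm_num) (by omega)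
  have hApos : 0 < A := Nat.pow_pos (by norm_num)
  have hBpos : 0 < B := Nat.pow_pos (by norm_num)
  -- Fourier coefficients of f
  have hfhat' : ∀ i, fhat i = if i ∈ Finset.Ico A (2*A) then (1:ℝ) else 0 := by
    intro i
    rw [hfhat i]
    have hfy : ∀ y, f y = ∑ k ∈ Finset.Ico A (2*A), walsh k y := by
      intro y
      rw [hf y, dirichlet, dirichlet]
      have h2A : 2 ^ (2*n+1) = 2*A := by rw [hA]; ring
      rw [h2A, Finset.range_eq_Ico]
      have hcons := Finset.sum_Ico_consecutive (fun k => walsh k y) (Nat.zero_le A)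
        (show A ≤ 2*A by omega)
      rw [← Finset.range_eq_Ico] at hcons
      linarith
    simp_rw [hfy, Finset.sum_mul]
    rw [MeasureTheory.integral_finset_sum]
    · simp_rw [integral_walsh_mul]
      exact Finset.sum_ite_eq' _ i (fun _ => (1:ℝ))
    · intro k _
      have heq : (fun y => walsh k y * walsh i y) = walsh (k ^^^ i) :=
        funext fun y => walsh_mul k i y
      rw [heq]
      exact walsh_integrable _
  set ε : ℝ := walsh A x with hεdef
  have hεpm : ε = 1 ∨ ε = -1 := walsh_sq A x
  have hεabs : |ε| = 1 := by rcases hεpm with h | h <;> simp [h]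
  have hwm : ∀ m < B, walsh (A + m) x = ε := by
    intro m hm
    have hmA : m < A := lt_of_lt_of_le hm hBA
    rw [← two_pow_xor hmA, ← walsh_mul, walsh_low x hx hm, mul_one]
  -- partial sums
  have hSfilter : ∀ j, j ≤ q → S j x = ∑ k ∈ Finset.Ico A j, walsh k x := by
    intro j hj
    rw [hS j x]
    have : ∀ k, fhat k * walsh k x = if k ∈ Finset.Ico A (2*A) then walsh k x else 0 := by
      intro k
      rw [hfhat' k]
      by_cases h : k ∈ Finset.Ico A (2*A) <;> simp [h]
    simp_rw [this]
    rw [Finset.sum_ite_mem]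
    congr 1
    ext k
    simp only [Finset.mem_inter, Finset.mem_range, Finset.mem_Ico]
    constructor
    · rintro ⟨h1, h2, h3⟩; exact ⟨h2, h1⟩
    · rintro ⟨h1, h2⟩
      refine ⟨h2, h1, ?_⟩
      have : j ≤ A + B := by omega
      omega
  have hSzero : ∀ j, j ≤ A → S j x = 0 := by
    intro j hj
    rw [hSfilter j (by omega), Finset.Ico_eq_empty (by omega), Finset.sum_empty]
  have hSval : ∀ j, A < j → j ≤ q → S j x = ((j - A : ℕ) : ℝ) * ε := by
    intro j hj1 hj2
    rw [hSfilter j hj2, Finset.sum_Ico_eq_sum_range]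
    have : ∀ m ∈ Finset.range (j - A), walsh (A + m) x = ε := by
      intro m hm
      have := Finset.mem_range.mp hm
      exact hwm m (by omega)
    rw [Finset.sum_congr rfl this, Finset.sum_const, nsmul_eq_mul, Finset.card_range]
  -- the main sum
  set T := ∑ i ∈ Finset.range B, ((i:ℝ)+1)/((A:ℝ)+1+i) with hT
  have key : ∑ j ∈ Finset.Icc 1 q, S j x / j = ε * T := by
    rw [show Finset.Icc 1 q = Finset.Ioc 0 q from Finset.Icc_add_one_left_eq_Ioc 0 q,
      ← Finset.sum_Ioc_consecutive (fun j => S j x / (j:ℝ)) (Nat.zero_le A) (show A ≤ q by omega)]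
    have h1 : ∑ j ∈ Finset.Ioc 0 A, S j x / (j:ℝ) = 0 :=
      Finset.sum_eq_zero fun j hj => by
        rw [hSzero j (Finset.mem_Ioc.mp hj).2]; simp
    rw [h1, zero_add]
    have h2 : Finset.Ioc A q = Finset.Ico (A+1) (A+B+1) := by
      ext k; simp only [Finset.mem_Ioc, Finset.mem_Ico]; omega
    rw [h2, Finset.sum_Ico_eq_sum_range, show A + B + 1 - (A+1) = B from by omega, hT,
      Finset.mul_sum]
    refine Finset.sum_congr rfl fun i hi => ?_
    rw [hSval (A+1+i) (by omega) (by have := Finset.mem_range.mp hi; omega),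
      show A+1+i - A = i+1 from by omega]
    push_cast
    have hpos : ((A:ℝ)+1+i) ≠ 0 := by positivity
    field_simp
  -- lower bound for T
  have hTl : (B:ℝ)^2/(4*A) ≤ T := by
    have hstep : ∀ i ∈ Finset.range B, ((i:ℝ)+1)/(2*(A:ℝ)) ≤ ((i:ℝ)+1)/((A:ℝ)+1+i) := by
      intro i hi
      have hiB : i < B := Finset.mem_range.mp hi
      have h1 : (0:ℝ) < (A:ℝ)+1+i := by positivity
      have h2 : (A:ℝ)+1+i ≤ 2*(A:ℝ) := by
        have : i + 1 ≤ A := by omega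
        have := (Nat.cast_le (α := ℝ)).mpr this
        push_cast at this ⊢
        linarith
      gcongr
    have h0 : ∑ i ∈ Finset.range (B+1), i = ∑ i ∈ Finset.range B, (i+1) := by
      rw [Finset.sum_range_succ']; simp
    have h1 : (∑ i ∈ Finset.range B, (i+1)) * 2 = (B+1)*B := by
      rw [← h0]; exact Finset.sum_range_id_mul_two (B+1)
    have hsumR : ∑ i ∈ Finset.range B, ((i:ℝ)+1) = ((B:ℝ)+1)*(B:ℝ)/2 := by
      have := congrArg (Nat.cast : ℕ → ℝ) h1
      push_cast at this
      linarith
    calc (B:ℝ)^2/(4*A) = ((B:ℝ)^2/2)/(2*(A:ℝ)) := by ring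
      _ ≤ (∑ i ∈ Finset.range B, ((i:ℝ)+1))/(2*(A:ℝ)) := by
          have hA0 : (0:ℝ) < 2*(A:ℝ) := by positivity
          have : (B:ℝ)^2/2 ≤ ∑ i ∈ Finset.range B, ((i:ℝ)+1) := by
            rw [hsumR]; nlinarith [Nat.cast_nonneg (α := ℝ) B]
          gcongr
      _ = ∑ i ∈ Finset.range B, ((i:ℝ)+1)/(2*(A:ℝ)) := by rw [Finset.sum_div]
      _ ≤ T := Finset.sum_le_sum hstep
  have hlqpos : 0 < lq := by
    rw [hlq]
    refine Finset.sum_pos (fun k hk => ?_) ⟨1, Finset.mem_Icc.mpr ⟨le_refl 1, by omega⟩⟩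
    have h1 := (Finset.mem_Icc.mp hk).1
    have h2 : (0:ℝ) < (k:ℝ) := by exact_mod_cast h1
    positivity
  have hT0 : 0 ≤ T := le_trans (by positivity) hTl
  rw [key, abs_mul, abs_mul, hεabs,
    abs_of_pos (show (0:ℝ) < 1/lq by positivity), abs_of_nonneg hT0]
  have hAR : ((A:ℕ):ℝ) = 2^(2*n) := by rw [hA]; push_cast; ring
  have h4 : (4:ℝ)^(2*s) = (B:ℝ)^2 := by
    rw [hB]; push_cast
    rw [← pow_mul, show (4:ℝ) = 2^2 from by norm_num, ← pow_mul]
    ring_nf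
  rw [one_mul, h4, ← hAR]
  have hA0 : (0:ℝ) < (A:ℝ) := by exact_mod_cast hApos
  calc 1/4 * (B:ℝ)^2 / (lq * A) = 1/lq * ((B:ℝ)^2/(4*A)) := by
        field_simp
    _ ≤ 1/lq * T := mul_le_mul_of_nonneg_left hTl (by positivity)
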